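/- Let G be a locally compact, second-countable Hausdorff unimodular topological group with (two-sided invariant) Haar measure μ of full support, let H ⊆ G be a subgroup, and let K : G × G → ℝ be continuous. Suppose that for every continuous compactly supported U : G → ℝ, every g ∈ G and every h, h' ∈ H one has ∫_G K(g,q) U(qh) dμ(q) = ∫_G K(g,q) U(q) dμ(q) and ∫_G K(gh',q) U(q) dμ(q) = ∫_G K(g,q) U(q) dμ(q). Then K(g h', q h) = K(g, q) for all g, q ∈ G and all h, h' ∈ H. -/

import Mathlib

open MeasureTheory Set

lemma test_fn_zero
    {G : Type*} [TopologicalSpace G] [LocallyCompactSpace G] [T2Space G]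
    [MeasurableSpace G] [BorelSpace G]
    (μ : Measure G) [IsFiniteMeasureOnCompacts μ] [μ.IsOpenPosMeasure]
    (f : G → ℝ) (hf : Continuous f)
    (h : ∀ U : G → ℝ, Continuous U → HasCompactSupport U →
      ∫ q, f q * U q ∂μ = 0) : ∀ x, f x = 0 := by
  intro x
  by_contra hx
  set V : Set G := {y | 0 < f x * f y} with hV
  have hVopen : IsOpen V := isOpen_lt continuous_const (continuous_const.mul hf)
  have hxV : x ∈ V := by simp only [hV, mem_setOf_eq]; exact mul_self_pos.mpr hx
  obtain ⟨U, hU1, hU0, hUc, hUi⟩ := exists_continuous_one_zero_of_isCompact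
    (isCompact_singleton (x := x)) hVopen.isClosed_compl
    (disjoint_compl_right_iff_subset.mpr (singleton_subset_iff.mpr hxV))
  set g : G → ℝ := fun y => f x * (f y * U y) with hg
  have hgc : Continuous g := continuous_const.mul (hf.mul U.continuous)
  have hgcs : HasCompactSupport g := (hUc.mul_left.mul_left)
  have hgint : Integrable g μ := hgc.integrable_of_hasCompactSupport hgcs
  have hge : ∀ y, 0 ≤ g y := by
    intro y
    by_cases hy : y ∈ V
    · have h1 : 0 ≤ f x * f y := le_of_lt (by simpa [hV] using hy)
      have h2 : 0 ≤ U y := (hUi y).1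
      calc (0:ℝ) ≤ (f x * f y) * U y := mul_nonneg h1 h2
        _ = g y := by simp [hg]; ring
    · have : U y = 0 := hU0 hy
      simp [hg, this]
  have hpos : 0 < ∫ y, g y ∂μ := by
    rw [integral_pos_iff_support_of_nonneg hge hgint]
    have hsopen : IsOpen (Function.support g) := hgc.isOpen_support
    have hxs : x ∈ Function.support g := by
      simp only [Function.mem_support, hg, hU1 rfl]
      simpa using mul_self_pos.mpr hx
    exact hsopen.measure_pos μ ⟨x, hxs⟩
  have : ∫ y, g y ∂μ = f x * ∫ y, f y * U y ∂μ := by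
    rw [← integral_const_mul]
  rw [this, h U U.continuous hUc, mul_zero] at hpos
  exact lt_irrefl _ hpos

/-- On a unimodular locally compact second-countable group, a continuous kernel
whose integral operator is invariant under the right-regular actions of a subgroup `H` (in the
sense of the two displayed identities) is itself right-`H`-invariant in both entries:
`K (g * h', q * h) = K (g, q)`. -/
theorem kernel_right_H_invariant
    {G : Type*} [Group G] [TopologicalSpace G] [IsTopologicalGroup G]
    [LocallyCompactSpace G] [SecondCountableTopology G] [T2Space G]
    [MeasurableSpace G] [BorelSpace G]
    (μ : Measure G) [μ.IsHaarMeasure] [μ.IsMulRightInvariant]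
    (H : Subgroup G)
    (K : G × G → ℝ) (hK : Continuous K)
    (h1 : ∀ U : G → ℝ, Continuous U → HasCompactSupport U → ∀ g : G, ∀ h ∈ H,
      ∫ q, K (g, q) * U (q * h) ∂μ = ∫ q, K (g, q) * U q ∂μ)
    (h2 : ∀ U : G → ℝ, Continuous U → HasCompactSupport U → ∀ g : G, ∀ h' ∈ H,
      ∫ q, K (g * h', q) * U q ∂μ = ∫ q, K (g, q) * U q ∂μ) :
    ∀ g q : G, ∀ h ∈ H, ∀ h' ∈ H, K (g * h', q * h) = K (g, q) := by
  have hKr : ∀ a : G, Continuous (fun q => K (a, q)) := fun a =>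
    hK.comp (continuous_const.prodMk continuous_id)
  -- Step A: right invariance in the second variable
  have stepA : ∀ g : G, ∀ h ∈ H, ∀ q : G, K (g, q * h) = K (g, q) := by
    have key : ∀ g : G, ∀ h ∈ H, ∀ q : G, K (g, q * h⁻¹) = K (g, q) := by
      intro g h hh
      have hzero : ∀ x, (K (g, x * h⁻¹) - K (g, x)) = 0 := by
        apply test_fn_zero μ _ (((hKr g).comp (continuous_mul_right h⁻¹)).sub (hKr g))
        intro U hU hUc
        have hi1 : Integrable (fun q => K (g, q * h⁻¹) * U q) μ :=
          (((hKr g).comp (continuous_mul_right h⁻¹)).mul hU).integrable_of_hasCompactSupport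
            hUc.mul_left
        have hi2 : Integrable (fun q => K (g, q) * U q) μ :=
          ((hKr g).mul hU).integrable_of_hasCompactSupport hUc.mul_left
        have hchg : ∫ q, K (g, q) * U (q * h) ∂μ = ∫ q, K (g, q * h⁻¹) * U q ∂μ := by
          have := integral_mul_right_eq_self (μ := μ) (fun x => K (g, x * h⁻¹) * U x) h
          simp only [mul_inv_cancel_right] at this
          exact this
        simp only [Function.comp, Pi.sub_apply, sub_mul]
        rw [integral_sub hi1 hi2, ← hchg, h1 U hU hUc g h hh, sub_self]
      intro q
      have := hzero q
      linarith [this]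
    intro g h hh q
    have := key g h⁻¹ (H.inv_mem hh) q
    simpa using this
  -- Step B: right invariance in the first variable
  have stepB : ∀ g : G, ∀ h' ∈ H, ∀ q : G, K (g * h', q) = K (g, q) := by
    intro g h' hh'
    have hzero : ∀ x, (K (g * h', x) - K (g, x)) = 0 := by
      apply test_fn_zero μ _ ((hKr (g * h')).sub (hKr g))
      intro U hU hUc
      have hi1 : Integrable (fun q => K (g * h', q) * U q) μ :=
        ((hKr (g * h')).mul hU).integrable_of_hasCompactSupport hUc.mul_left
      have hi2 : Integrable (fun q => K (g, q) * U q) μ :=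
        ((hKr g).mul hU).integrable_of_hasCompactSupport hUc.mul_left
      simp only [Function.comp, Pi.sub_apply, sub_mul]
      rw [integral_sub hi1 hi2, h2 U hU hUc g h' hh', sub_self]
    intro q
    have := hzero q
    linarith [this]
  intro g q h hh h' hh'
  rw [stepB g h' hh' (q * h), stepA g h hh q]
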